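/- Let $y_1,\dots,y_d > 0$ and $\beta > 1$. Then $\left(\sum_{j=1}^d y_j^{1-\beta}\right)^{1/\beta} \to \max_j (1/y_j)$ as $\beta \to \infty$. Consequently the combined fairness-efficiency value $-\left(\sum_j y_j^{1-\beta}\right)^{1/\beta}$ converges to $-\max_j(1/y_j) = -1/\min_j y_j$ as $\beta \to \infty$. -/

import Mathlib

open Real Finset Filter Topology

lemma aux_rpow_one_div (a : ℝ) (ha : 0 < a) :
    Tendsto (fun β : ℝ => a ^ (1 / β)) atTop (𝓝 1) := by
  have h0 : Tendsto (fun β : ℝ => 1 / β) atTop (𝓝 (0 : ℝ)) := by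
    simpa [one_div] using (tendsto_inv_atTop_zero : Tendsto (fun x : ℝ => x⁻¹) atTop (𝓝 0))
  have hc : ContinuousAt (fun x : ℝ => a ^ x) (0 : ℝ) :=
    Real.continuousAt_const_rpow ha.ne'
  have := hc.tendsto.comp h0
  simpa [Function.comp_def] using this

/-- Max-ratio limit: for fixed positive `y`, `(∑ j, y j ^ (1-β))^(1/β) → max_j (1/y j)`
as `β → ∞`, and the combined value `-(∑ j, y j ^ (1-β))^(1/β)` tends to
`-max_j (1/y j) = -1/min_j y j`. -/
theorem stmt_3 {d : ℕ} [NeZero d] (y : Fin d → ℝ) (hy : ∀ j, 0 < y j) :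
    Tendsto (fun β : ℝ => (∑ j, y j ^ (1 - β)) ^ (1 / β)) atTop
      (𝓝 (Finset.univ.sup' Finset.univ_nonempty (fun j => 1 / y j))) ∧
    Tendsto (fun β : ℝ => -((∑ j, y j ^ (1 - β)) ^ (1 / β))) atTop
      (𝓝 (-(1 / Finset.univ.inf' Finset.univ_nonempty y))) ∧
    Finset.univ.sup' Finset.univ_nonempty (fun j => 1 / y j) =
      1 / Finset.univ.inf' Finset.univ_nonempty y := by
  have hne : (Finset.univ : Finset (Fin d)).Nonempty := Finset.univ_nonempty
  set M := Finset.univ.sup' Finset.univ_nonempty (fun j => 1 / y j) with hMdef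
  obtain ⟨m, -, hm⟩ := Finset.exists_mem_eq_sup' hne (fun j => 1 / y j)
  have hm' : M = 1 / y m := hm
  have hMpos : 0 < M := by rw [hm']; exact one_div_pos.mpr (hy m)
  have hMle : ∀ j, 1 / y j ≤ M := fun j =>
    Finset.le_sup' (fun j => 1 / y j) (Finset.mem_univ j)
  -- the equality part
  obtain ⟨k, -, hk⟩ := Finset.exists_mem_eq_inf' hne y
  have hkpos : 0 < Finset.univ.inf' Finset.univ_nonempty y := by rw [hk]; exact hy k
  have heq : M = 1 / Finset.univ.inf' Finset.univ_nonempty y := by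
    apply le_antisymm
    · apply Finset.sup'_le
      intro j _
      exact one_div_le_one_div_of_le hkpos (Finset.inf'_le y (Finset.mem_univ j))
    · rw [hk]
      exact hMle k
  set S := ∑ j, y j with hSdef
  have hSpos : 0 < S := Finset.sum_pos (fun j _ => hy j) hne
  -- lower bound
  have hlow : ∀ᶠ β : ℝ in atTop,
      y m ^ (1 / β) * M ≤ (∑ j, y j ^ (1 - β)) ^ (1 / β) := by
    filter_upwards [eventually_ge_atTop (1 : ℝ)] with β hβ
    have hβ0 : 0 < β := lt_of_lt_of_le one_pos hβ
    have h1 : y m ^ (1 / β) * M = (y m ^ (1 - β)) ^ (1 / β) := by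
      rw [← Real.rpow_mul (hy m).le]
      have : (1 - β) * (1 / β) = 1 / β - 1 := by field_simp
      rw [this, Real.rpow_sub (hy m), Real.rpow_one, hm']
      ring
    rw [h1]
    apply Real.rpow_le_rpow (Real.rpow_nonneg (hy m).le _)
    · exact Finset.single_le_sum (fun j _ => (Real.rpow_pos_of_pos (hy j) _).le)
        (Finset.mem_univ m)
    · positivity
  -- upper bound
  have hhigh : ∀ᶠ β : ℝ in atTop,
      (∑ j, y j ^ (1 - β)) ^ (1 / β) ≤ S ^ (1 / β) * M := by
    filter_upwards [eventually_ge_atTop (1 : ℝ)] with β hβ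
    have hβ0 : 0 < β := lt_of_lt_of_le one_pos hβ
    have hsum : ∑ j, y j ^ (1 - β) ≤ S * M ^ β := by
      calc ∑ j, y j ^ (1 - β) ≤ ∑ j, y j * M ^ β := by
            apply Finset.sum_le_sum
            intro j _
            have h2 : y j ^ (1 - β) = y j * (1 / y j) ^ β := by
              rw [Real.rpow_sub (hy j), Real.rpow_one, div_eq_mul_inv,
                one_div, Real.inv_rpow (hy j).le]
            rw [h2]
            apply mul_le_mul_of_nonneg_left _ (hy j).le
            exact Real.rpow_le_rpow (one_div_nonneg.mpr (hy j).le) (hMle j) hβ0.le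
        _ = S * M ^ β := by rw [← Finset.sum_mul]
    calc (∑ j, y j ^ (1 - β)) ^ (1 / β) ≤ (S * M ^ β) ^ (1 / β) := by
          apply Real.rpow_le_rpow _ hsum (one_div_pos.mpr hβ0).le
          exact Finset.sum_nonneg fun j _ => (Real.rpow_pos_of_pos (hy j) _).le
      _ = S ^ (1 / β) * M := by
          rw [Real.mul_rpow hSpos.le (Real.rpow_nonneg hMpos.le _),
            ← Real.rpow_mul hMpos.le, mul_one_div_cancel hβ0.ne', Real.rpow_one]
  have hg : Tendsto (fun β : ℝ => y m ^ (1 / β) * M) atTop (𝓝 M) := by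
    simpa using (aux_rpow_one_div (y m) (hy m)).mul_const M
  have hh : Tendsto (fun β : ℝ => S ^ (1 / β) * M) atTop (𝓝 M) := by
    simpa using (aux_rpow_one_div S hSpos).mul_const M
  have hmain : Tendsto (fun β : ℝ => (∑ j, y j ^ (1 - β)) ^ (1 / β)) atTop (𝓝 M) :=
    tendsto_of_tendsto_of_tendsto_of_le_of_le' hg hh hlow hhigh
  refine ⟨hmain, ?_, heq⟩
  rw [← heq]
  exact hmain.neg
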